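/- On the duplex repeated path network 𝒢_R on N ≥ 3 agents with all agents using Protocol OR and seed set S₀ = {j}, for all indices with 1 < j < i < N (and symmetrically 1 < i < j < N), the probability that agent i is active at steady state of the multiplex LTM is ℙ_LTM(i) = (3/4)^{|i−j|}. -/

import Mathlib

open MeasureTheory

inductive Protocol
  | OR
  | AND
deriving DecidableEq

noncomputable def ltmStep {n m : ℕ} (w : Fin m → Fin n → Fin n → ℝ)
    (u : Fin n → Protocol) (μ : Fin n → Fin m → ℝ)
    (A : Finset (Fin n)) : Finset (Fin n) :=
  A ∪ Finset.univ.filter fun i =>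
    (u i = Protocol.OR ∧ ∃ k, μ i k < ∑ j ∈ A, w k i j) ∨
    (u i = Protocol.AND ∧ ∀ k, μ i k < ∑ j ∈ A, w k i j)

noncomputable def ltmSS {n m : ℕ} (w : Fin m → Fin n → Fin n → ℝ)
    (u : Fin n → Protocol) (S₀ : Finset (Fin n))
    (μ : Fin n → Fin m → ℝ) : Finset (Fin n) :=
  (ltmStep w u μ)^[n] S₀

noncomputable def thMeasure (n m : ℕ) : Measure (Fin n → Fin m → ℝ) :=
  Measure.pi fun _ => Measure.pi fun _ => volume.restrict (Set.Icc (0:ℝ) 1)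

noncomputable def pLTM {n m : ℕ} (w : Fin m → Fin n → Fin n → ℝ)
    (u : Fin n → Protocol) (S₀ : Finset (Fin n)) (i : Fin n) : ℝ :=
  (thMeasure n m {μ | i ∈ ltmSS w u S₀ μ}).toReal

def lemStep {n m : ℕ} (S₀ : Finset (Fin n)) (u : Fin n → Protocol)
    (σ : Fin n → Fin m → Fin n) (A : Finset (Fin n)) : Finset (Fin n) :=
  S₀ ∪ A ∪ Finset.univ.filter fun i =>
    (u i = Protocol.OR ∧ ∃ k, σ i k ∈ A) ∨
    (u i = Protocol.AND ∧ ∀ k, σ i k ∈ A)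

def UReachable {n m : ℕ} (S₀ : Finset (Fin n)) (u : Fin n → Protocol)
    (σ : Fin n → Fin m → Fin n) (i : Fin n) : Prop :=
  i ∈ (lemStep S₀ u σ)^[n] S₀

instance {n m : ℕ} (S₀ : Finset (Fin n)) (u : Fin n → Protocol)
    (σ : Fin n → Fin m → Fin n) (i : Fin n) : Decidable (UReachable S₀ u σ i) := by
  unfold UReachable; infer_instance

noncomputable def rProb {n m : ℕ} (w : Fin m → Fin n → Fin n → ℝ)
    (S₀ : Finset (Fin n)) (u : Fin n → Protocol) (i : Fin n) : ℝ :=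
  ∑ σ : Fin n → Fin m → Fin n,
    if UReachable S₀ u σ i then ∏ a : Fin n, ∏ k : Fin m, w k a (σ a k) else 0

noncomputable def casCen {n m : ℕ} (w : Fin m → Fin n → Fin n → ℝ)
    (u : Fin n → Protocol) (j : Fin n) : ℝ :=
  ∑ i : Fin n, pLTM w u {j} i

noncomputable def pathW (N : ℕ) (i j : Fin N) : ℝ :=
  if j.val = i.val + 1 ∨ i.val = j.val + 1 then
    (if i.val = 0 ∨ i.val = N - 1 then 1 else 1/2)
  else 0

noncomputable def cycleW (N : ℕ) (i j : Fin N) : ℝ :=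
  if (i.val + 1) % N = j.val ∨ (j.val + 1) % N = i.val then 1/2 else 0

noncomputable def permW2 (N : ℕ) (i j : Fin N) : ℝ :=
  if ((i.val + 1) % N = j.val ∨ (j.val + 1) % N = i.val) ∧
      ¬((i.val = N - 2 ∧ j.val = N - 1) ∨ (i.val = N - 1 ∧ j.val = N - 2)) then
    (if i.val = N - 2 ∨ i.val = N - 1 then 1 else 1/2)
  else 0

lemma pathW_nonneg (N : ℕ) (i j : Fin N) : 0 ≤ pathW N i j := by
  unfold pathW; split_ifs <;> norm_num

lemma pathW_half (N : ℕ) (b c : Fin N) (h1 : 1 ≤ b.val) (h2 : b.val < N - 1)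
    (hadj : c.val = b.val + 1 ∨ b.val = c.val + 1) : pathW N b c = 1/2 := by
  unfold pathW
  rw [if_pos hadj, if_neg (by omega)]

lemma pathW_zero (N : ℕ) (b c : Fin N)
    (hadj : ¬(c.val = b.val + 1 ∨ b.val = c.val + 1)) : pathW N b c = 0 := by
  unfold pathW; rw [if_neg hadj]

section dyn
variable {N : ℕ} (μ : Fin N → Fin 2 → ℝ)

local notation "stp" => ltmStep (fun _ : Fin 2 => pathW N) (fun _ => Protocol.OR) μ

lemma stp_subset (A : Finset (Fin N)) : A ⊆ stp A := Finset.subset_union_left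

lemma stp_iter_mono {s t : ℕ} (h : s ≤ t) (A : Finset (Fin N)) :
    (stp)^[s] A ⊆ (stp)^[t] A := by
  induction t with
  | zero => simpa [Nat.le_zero.mp h]
  | succ t ih =>
    rcases Nat.lt_or_ge s (t+1) with h' | h'
    · rw [Function.iterate_succ_apply']
      exact (ih (by omega)).trans (stp_subset μ _)
    · have : s = t + 1 := by omega
      simp [this]

lemma forward_right (i j : Fin N) (hi2 : i.val < N - 1) (hlt : j.val < i.val)
    (hchain : ∀ b : Fin N, j.val < b.val → b.val ≤ i.val → ∃ k : Fin 2, μ b k < 1/2) :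
    ∀ t, t ≤ i.val - j.val → ∀ b : Fin N, b.val = j.val + t → b ∈ (stp)^[t] {j} := by
  intro t
  induction t with
  | zero =>
    intro _ b hb
    have : b = j := Fin.ext (by omega)
    simp [this]
  | succ t ih =>
    intro ht b hb
    have hc : (j.val + t) < N := by omega
    set c : Fin N := ⟨j.val + t, hc⟩ with hcdef
    have hcmem : c ∈ (stp)^[t] {j} := ih (by omega) c rfl
    rw [Function.iterate_succ_apply']
    obtain ⟨k, hk⟩ := hchain b (by omega) (by omega)
    apply Finset.mem_union_right
    rw [Finset.mem_filter]
    refine ⟨Finset.mem_univ _, Or.inl ⟨rfl, ⟨k, ?_⟩⟩⟩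
    have hle : pathW N b c ≤ ∑ c' ∈ (stp)^[t] {j}, pathW N b c' :=
      Finset.single_le_sum (fun x _ => pathW_nonneg N b x) hcmem
    have hval : pathW N b c = 1/2 :=
      pathW_half N b c (by omega) (by omega) (Or.inr (by simp [hcdef, hb]; omega))
    linarith

lemma forward_left (i j : Fin N) (hi1 : 1 ≤ i.val) (hj2 : j.val < N - 1)
    (hlt : i.val < j.val)
    (hchain : ∀ b : Fin N, i.val ≤ b.val → b.val < j.val → ∃ k : Fin 2, μ b k < 1/2) :
    ∀ t, t ≤ j.val - i.val → ∀ b : Fin N, b.val = j.val - t → b ∈ (stp)^[t] {j} := by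
  intro t
  induction t with
  | zero =>
    intro _ b hb
    have : b = j := Fin.ext (by omega)
    simp [this]
  | succ t ih =>
    intro ht b hb
    have hc : (j.val - t) < N := by omega
    set c : Fin N := ⟨j.val - t, hc⟩ with hcdef
    have hcmem : c ∈ (stp)^[t] {j} := ih (by omega) c rfl
    rw [Function.iterate_succ_apply']
    obtain ⟨k, hk⟩ := hchain b (by omega) (by omega)
    apply Finset.mem_union_right
    rw [Finset.mem_filter]
    refine ⟨Finset.mem_univ _, Or.inl ⟨rfl, ⟨k, ?_⟩⟩⟩
    have hle : pathW N b c ≤ ∑ c' ∈ (stp)^[t] {j}, pathW N b c' :=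
      Finset.single_le_sum (fun x _ => pathW_nonneg N b x) hcmem
    have hval : pathW N b c = 1/2 :=
      pathW_half N b c (by omega) (by omega) (Or.inl (by simp [hcdef]; omega))
    linarith

lemma backward_right (j a : Fin N) (ha1 : 1 ≤ a.val) (ha2 : a.val < N - 1)
    (hja : j.val < a.val) (hnn : ∀ b k, 0 ≤ μ b k)
    (hμa : ∀ k : Fin 2, ¬ μ a k < 1/2) :
    ∀ t, ∀ b ∈ (stp)^[t] ({j} : Finset (Fin N)), b.val < a.val := by
  intro t
  induction t with
  | zero => intro b hb; simp only [Function.iterate_zero_apply, Finset.mem_singleton] at hb; omega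
  | succ t ih =>
    intro b hb
    rw [Function.iterate_succ_apply'] at hb
    rcases Finset.mem_union.mp hb with hb | hb
    · exact ih b hb
    · rw [Finset.mem_filter] at hb
      rcases hb.2 with ⟨_, k, hk⟩ | ⟨hand, _⟩
      · by_contra hba
        push_neg at hba
        have hbN : b.val - 1 < N := by omega
        set b' : Fin N := ⟨b.val - 1, hbN⟩ with hb'def
        have hsum : ∑ c ∈ (stp)^[t] {j}, pathW N b c ≤
            ∑ c ∈ (stp)^[t] {j}, (if c = b' then (1/2:ℝ) else 0) := by
          apply Finset.sum_le_sum
          intro c hc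
          have hca : c.val < a.val := ih c hc
          by_cases hcb : c = b'
          · have hbeq : b.val = a.val := by
              have : c.val = b.val - 1 := by rw [hcb]
              omega
            rw [hcb, pathW_half N b b' (by omega) (by omega) (Or.inr (by simp [hb'def]; omega))]
            simp
          · rw [pathW_zero N b c, if_neg hcb]
            intro h
            rcases h with h | h
            · omega
            · exact hcb (Fin.ext (by simp [hb'def]; omega))
        rw [Finset.sum_ite_eq'] at hsum
        by_cases hmem : b' ∈ (stp)^[t] {j}
        · have hb'a : b'.val < a.val := ih b' hmem
          have hbeq : b = a := Fin.ext (by simp [hb'def] at hb'a; omega)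
          rw [if_pos hmem] at hsum
          exact hμa k (by rw [← hbeq]; linarith)
        · rw [if_neg hmem] at hsum
          have := hnn b k
          linarith
      · exact absurd hand (by simp)

lemma backward_left (j a : Fin N) (ha1 : 1 ≤ a.val) (ha2 : a.val < N - 1)
    (hja : a.val < j.val) (hnn : ∀ b k, 0 ≤ μ b k)
    (hμa : ∀ k : Fin 2, ¬ μ a k < 1/2) :
    ∀ t, ∀ b ∈ (stp)^[t] ({j} : Finset (Fin N)), a.val < b.val := by
  intro t
  induction t with
  | zero => intro b hb; simp only [Function.iterate_zero_apply, Finset.mem_singleton] at hb; omega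
  | succ t ih =>
    intro b hb
    rw [Function.iterate_succ_apply'] at hb
    rcases Finset.mem_union.mp hb with hb | hb
    · exact ih b hb
    · rw [Finset.mem_filter] at hb
      rcases hb.2 with ⟨_, k, hk⟩ | ⟨hand, _⟩
      · by_contra hba
        push_neg at hba
        have hbN : b.val + 1 < N := by omega
        set b' : Fin N := ⟨b.val + 1, hbN⟩ with hb'def
        have hsum : ∑ c ∈ (stp)^[t] {j}, pathW N b c ≤
            ∑ c ∈ (stp)^[t] {j}, (if c = b' then (1/2:ℝ) else 0) := by
          apply Finset.sum_le_sum
          intro c hc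
          have hca : a.val < c.val := ih c hc
          by_cases hcb : c = b'
          · have hbeq : b.val = a.val := by
              have : c.val = b.val + 1 := by rw [hcb]
              omega
            rw [hcb, pathW_half N b b' (by omega) (by omega) (Or.inl (by simp [hb'def]))]
            simp
          · rw [pathW_zero N b c, if_neg hcb]
            intro h
            rcases h with h | h
            · exact hcb (Fin.ext (by simp [hb'def]; omega))
            · omega
        rw [Finset.sum_ite_eq'] at hsum
        by_cases hmem : b' ∈ (stp)^[t] {j}
        · have hb'a : a.val < b'.val := ih b' hmem
          have hb'v : b'.val = b.val + 1 := rfl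
          have hbeq : b = a := Fin.ext (by omega)
          rw [if_pos hmem] at hsum
          exact hμa k (by rw [← hbeq]; linarith)
        · rw [if_neg hmem] at hsum
          have := hnn b k
          linarith
      · exact absurd hand (by simp)

end dyn

noncomputable def nuI : Measure (Fin 2 → ℝ) :=
  Measure.pi fun _ => volume.restrict (Set.Icc (0:ℝ) 1)

instance : SigmaFinite nuI := by unfold nuI; infer_instance

lemma nuI_univ : nuI Set.univ = 1 := by
  rw [nuI, Measure.pi_univ]
  simp [Real.volume_Icc]

lemma nuI_Q : nuI {f : Fin 2 → ℝ | ∃ k, f k < 1/2} = ENNReal.ofReal (3/4) := by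
  set Q : Set (Fin 2 → ℝ) := {f | ∃ k, f k < 1/2} with hQdef
  have hQm : MeasurableSet Q := by
    have h : Q = ⋃ k, {f : Fin 2 → ℝ | f k < 1/2} := by ext f; simp [hQdef]
    rw [h]
    exact MeasurableSet.iUnion fun k =>
      measurableSet_lt (measurable_pi_apply k) measurable_const
  have hcompl : Qᶜ = Set.pi Set.univ (fun _ : Fin 2 => Set.Ici (1/2:ℝ)) := by
    ext f
    simp [hQdef, Set.mem_pi, not_lt, Pi.le_def]
  have hIci : Set.Ici (1/2:ℝ) ∩ Set.Icc 0 1 = Set.Icc (1/2) 1 := by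
    ext x
    simp only [Set.mem_inter_iff, Set.mem_Ici, Set.mem_Icc]
    constructor
    · rintro ⟨h1, _, h3⟩; exact ⟨h1, h3⟩
    · rintro ⟨h1, h2⟩; exact ⟨h1, by linarith, h2⟩
  have hcm : nuI Qᶜ = ENNReal.ofReal (1/4) := by
    rw [nuI, hcompl, Measure.pi_pi]
    simp only [Measure.restrict_apply measurableSet_Ici, hIci, Real.volume_Icc]
    rw [Finset.prod_const, ← ENNReal.ofReal_pow (by norm_num)]
    norm_num
  have hadd : nuI Q + nuI Qᶜ = 1 := by
    rw [← nuI_univ]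
    exact measure_add_measure_compl hQm
  have h34 : (ENNReal.ofReal (3/4)) + ENNReal.ofReal (1/4) = 1 := by
    rw [← ENNReal.ofReal_add (by norm_num) (by norm_num)]
    norm_num
  rw [hcm] at hadd
  rw [← h34] at hadd
  exact WithTop.add_right_cancel ENNReal.ofReal_ne_top hadd

lemma nuI_neg (k : Fin 2) : nuI {f : Fin 2 → ℝ | f k < 0} = 0 := by
  have h : {f : Fin 2 → ℝ | f k < 0} =
      Set.pi Set.univ (fun k' => if k' = k then Set.Iio (0:ℝ) else Set.univ) := by
    ext f
    simp only [Set.mem_setOf_eq, Set.mem_pi, Set.mem_univ, true_implies]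
    constructor
    · intro hf k'
      by_cases hk : k' = k <;> simp [hk, hf]
    · intro hf
      have := hf k
      simpa using this
  rw [nuI, h, Measure.pi_pi]
  apply Finset.prod_eq_zero (Finset.mem_univ k)
  rw [if_pos rfl, Measure.restrict_apply measurableSet_Iio]
  have : Set.Iio (0:ℝ) ∩ Set.Icc 0 1 = ∅ := by
    ext x; simp; intro h1 h2; linarith
  simp [this]


def chainP (N : ℕ) (i j : Fin N) (b : Fin N) : Prop :=
  (j.val < b.val ∧ b.val ≤ i.val) ∨ (i.val ≤ b.val ∧ b.val < j.val)

instance (N : ℕ) (i j : Fin N) : DecidablePred (chainP N i j) := fun b => by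
  unfold chainP; infer_instance

lemma card_filter_Ioc (N lo hi : ℕ) (hhi : hi < N) :
    (Finset.univ.filter fun b : Fin N => lo < b.val ∧ b.val ≤ hi).card = hi - lo := by
  rw [← Nat.card_Ioc lo hi]
  apply Finset.card_nbij (fun b => b.val)
  · intro b hb
    rw [Finset.mem_coe, Finset.mem_filter] at hb
    rw [Finset.mem_coe, Finset.mem_Ioc]
    exact hb.2
  · exact Fin.val_injective.injOn
  · intro x hx
    simp only [Finset.coe_Ioc, Set.mem_Ioc] at hx
    refine ⟨⟨x, by omega⟩, ?_, rfl⟩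
    simp only [Finset.coe_filter, Set.mem_setOf_eq, Finset.mem_univ, true_and]
    exact hx


/-- on the duplex repeated path network on `N ≥ 3` agents with all
agents using Protocol OR and seed `{j}`, for interior agents `i ≠ j`
(1-based: `1 < j < i < N` or `1 < i < j < N`), ℙ_LTM(i) = (3/4)^{|i−j|}.
(Agents are 0-indexed: 1-based agent `i` is `Fin N` value `i−1`.) -/
theorem repeated_path_OR_prob (N : ℕ) (hN : 3 ≤ N) (i j : Fin N)
    (hi1 : 1 ≤ i.val) (hi2 : i.val < N - 1)
    (hj1 : 1 ≤ j.val) (hj2 : j.val < N - 1) (hij : i ≠ j) :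
    pLTM (fun _ : Fin 2 => pathW N) (fun _ => Protocol.OR) {j} i =
      (3/4 : ℝ) ^ (Nat.dist i.val j.val) := by
  classical
  have hij' : i.val ≠ j.val := fun h => hij (Fin.ext h)
  set Q : Set (Fin 2 → ℝ) := {f | ∃ k, f k < 1/2} with hQdef
  set E : Set (Fin N → Fin 2 → ℝ) :=
    {μ | ∀ b : Fin N, chainP N i j b → ∃ k : Fin 2, μ b k < 1/2} with hEdef
  set B : Set (Fin N → Fin 2 → ℝ) := {μ | ∃ b k, μ b k < 0} with hBdef
  set S : Set (Fin N → Fin 2 → ℝ) :=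
    {μ | i ∈ ltmSS (fun _ : Fin 2 => pathW N) (fun _ => Protocol.OR) {j} μ} with hSdef
  have hES : E ⊆ S := by
    intro μ hμ
    simp only [hSdef, Set.mem_setOf_eq, ltmSS]
    rcases Nat.lt_or_ge j.val i.val with hlt | hge
    · have h1 := forward_right μ i j hi2 hlt
        (fun b hb1 hb2 => hμ b (Or.inl ⟨hb1, hb2⟩)) (i.val - j.val) le_rfl i (by omega)
      exact stp_iter_mono μ (show i.val - j.val ≤ N by omega) {j} h1
    · have hlt : i.val < j.val := by omega
      have h1 := forward_left μ i j hi1 hj2 hlt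
        (fun b hb1 hb2 => hμ b (Or.inr ⟨hb1, hb2⟩)) (j.val - i.val) le_rfl i (by omega)
      exact stp_iter_mono μ (show j.val - i.val ≤ N by omega) {j} h1
  have hSEB : S ⊆ E ∪ B := by
    intro μ hμS
    by_cases hμB : μ ∈ B
    · exact Or.inr hμB
    · left
      have hnn : ∀ b k, 0 ≤ μ b k := by
        intro b k
        by_contra h
        exact hμB ⟨b, k, by linarith⟩
      intro b hb
      by_contra hb2
      push_neg at hb2
      have hμa : ∀ k : Fin 2, ¬ μ b k < 1/2 := fun k => not_lt.mpr (hb2 k)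
      simp only [hSdef, Set.mem_setOf_eq, ltmSS] at hμS
      rcases hb with ⟨hb1, hb3⟩ | ⟨hb1, hb3⟩
      · have := backward_right μ j b (by omega) (by omega) hb1 hnn hμa N i hμS
        omega
      · have := backward_left μ j b (by omega) (by omega) hb3 hnn hμa N i hμS
        omega
  have hB0 : thMeasure N 2 B = 0 := by
    have hsub : B ⊆ ⋃ b : Fin N, ⋃ k : Fin 2, {μ : Fin N → Fin 2 → ℝ | μ b k < 0} := by
      rintro μ ⟨b, k, hbk⟩
      exact Set.mem_iUnion.mpr ⟨b, Set.mem_iUnion.mpr ⟨k, hbk⟩⟩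
    refine measure_mono_null hsub ?_
    refine measure_iUnion_null fun b => measure_iUnion_null fun k => ?_
    have hpi : {μ : Fin N → Fin 2 → ℝ | μ b k < 0} =
        Set.pi Set.univ (fun b' => if b' = b then {f : Fin 2 → ℝ | f k < 0} else Set.univ) := by
      ext μ
      simp only [Set.mem_setOf_eq, Set.mem_pi, Set.mem_univ, true_implies]
      constructor
      · intro hmem b'
        by_cases hb' : b' = b
        · subst hb'; simp [hmem]
        · simp [hb']
      · intro hmem
        have := hmem b
        simpa using this
    rw [show thMeasure N 2 = Measure.pi (fun _ : Fin N => nuI) from rfl, hpi, Measure.pi_pi]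
    refine Finset.prod_eq_zero (Finset.mem_univ b) ?_
    rw [if_pos rfl]
    exact nuI_neg k
  have hmeq : thMeasure N 2 S = thMeasure N 2 E := by
    refine le_antisymm ?_ (measure_mono hES)
    calc thMeasure N 2 S ≤ thMeasure N 2 (E ∪ B) := measure_mono hSEB
      _ ≤ thMeasure N 2 E + thMeasure N 2 B := measure_union_le E B
      _ = thMeasure N 2 E := by rw [hB0, add_zero]
  have hEpi : E = Set.pi Set.univ (fun b => if chainP N i j b then Q else Set.univ) := by
    ext μ
    simp only [hEdef, Set.mem_setOf_eq, Set.mem_pi, Set.mem_univ, true_implies]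
    constructor
    · intro hmem b
      by_cases hb : chainP N i j b
      · rw [if_pos hb]; exact hmem b hb
      · rw [if_neg hb]; trivial
    · intro hmem b hb
      have := hmem b
      rwa [if_pos hb] at this
  have hcard : (Finset.univ.filter (chainP N i j)).card = Nat.dist i.val j.val := by
    rcases Nat.lt_or_ge j.val i.val with hlt | hge
    · have hfe : Finset.univ.filter (chainP N i j) =
          Finset.univ.filter (fun b : Fin N => j.val < b.val ∧ b.val ≤ i.val) := by
        apply Finset.filter_congr
        intro b _
        unfold chainP
        omega
      rw [hfe, card_filter_Ioc N j.val i.val (by omega)]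
      simp [Nat.dist]
      omega
    · have hlt : i.val < j.val := by omega
      have hfe : Finset.univ.filter (chainP N i j) =
          Finset.univ.filter (fun b : Fin N => (i.val - 1) < b.val ∧ b.val ≤ j.val - 1) := by
        apply Finset.filter_congr
        intro b _
        unfold chainP
        omega
      rw [hfe, card_filter_Ioc N (i.val - 1) (j.val - 1) (by omega)]
      simp [Nat.dist]
      omega
  have hmE : thMeasure N 2 E = ENNReal.ofReal (3/4) ^ (Nat.dist i.val j.val) := by
    rw [hEpi, show thMeasure N 2 = Measure.pi (fun _ : Fin N => nuI) from rfl, Measure.pi_pi]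
    have hval : ∀ b : Fin N, nuI (if chainP N i j b then Q else Set.univ)
        = if chainP N i j b then ENNReal.ofReal (3/4) else 1 := by
      intro b
      by_cases hb : chainP N i j b
      · rw [if_pos hb, if_pos hb, hQdef, nuI_Q]
      · rw [if_neg hb, if_neg hb, nuI_univ]
    rw [Finset.prod_congr rfl (fun b _ => hval b), Finset.prod_ite,
      Finset.prod_const, Finset.prod_const_one, mul_one, hcard]
  unfold pLTM
  rw [show {μ | i ∈ ltmSS (fun _ : Fin 2 => pathW N) (fun _ => Protocol.OR) {j} μ} = S from hSdef.symm ▸ rfl]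
  rw [hmeq, hmE, ENNReal.toReal_pow, ENNReal.toReal_ofReal (by norm_num)]
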